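/- arXiv:1511.03043 — 3 statements merged into one kernel-verified Lean document; each statement's English description precedes it below -/
import Mathlib

section
/- A polyomino P in ℤ² cannot contain two disjoint dominoes (two disjoint pairs of edge-adjacent cells) if and only if P is contained in a plus-shape, i.e., P is a subtile of the plus-pentomino. -/
/-- Edge-adjacency of cells in `ℤ²`. -/
def Adj (a b : ℤ × ℤ) : Prop := (a.1 - b.1).natAbs + (a.2 - b.2).natAbs = 1

/-- A finset of cells is connected (via edge-adjacency). -/
def Conn (R : Finset (ℤ × ℤ)) : Prop :=
  ∀ a ∈ R, ∀ b ∈ R, Relation.ReflTransGen (fun x y => x ∈ R ∧ y ∈ R ∧ Adj x y) a b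

/-- A domino: a pair of edge-adjacent cells. -/
def IsDomino (D : Finset (ℤ × ℤ)) : Prop := ∃ a b, Adj a b ∧ D = {a, b}

/-- The plus-shape centered at `c`. -/
def plusAt (c : ℤ × ℤ) : Finset (ℤ × ℤ) :=
  {c, c + (1, 0), c + (-1, 0), c + (0, 1), c + (0, -1)}

lemma Adj.symm' {a b : ℤ × ℤ} (h : Adj a b) : Adj b a := by
  simp only [Adj] at *; omega

lemma Adj.ne' {a b : ℤ × ℤ} (h : Adj a b) : a ≠ b := by
  intro heq; subst heq; simp [Adj] at h

lemma no_common {a b x : ℤ × ℤ} (hab : Adj a b) (hxa : Adj x a) (hxb : Adj x b) : False := by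
  simp only [Adj] at *; omega

lemma mem_plusAt_iff {x c : ℤ × ℤ} : x ∈ plusAt c ↔ x = c ∨ Adj x c := by
  simp only [plusAt, Adj, Finset.mem_insert, Finset.mem_singleton, Prod.ext_iff,
    Prod.fst_add, Prod.snd_add]
  constructor
  · rintro (h | h | h | h | h) <;> simp_all <;> omega
  · rintro (h | h)
    · left; exact ⟨h.1, h.2⟩
    · omega

/-- A polyomino cannot contain two disjoint dominoes if and only if it is contained
in a plus-shape, i.e. it is a subtile of the plus-pentomino. -/
theorem no_two_disjoint_dominoes_iff_subtile_of_plus (P : Finset (ℤ × ℤ))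
    (hne : P.Nonempty) (hconn : Conn P) :
    (¬ ∃ D₁ D₂ : Finset (ℤ × ℤ), IsDomino D₁ ∧ IsDomino D₂ ∧
        D₁ ⊆ P ∧ D₂ ⊆ P ∧ Disjoint D₁ D₂) ↔ ∃ c, P ⊆ plusAt c := by
  constructor
  · intro h
    by_cases hsing : ∀ x ∈ P, ∀ y ∈ P, x = y
    · obtain ⟨a, ha⟩ := hne
      exact ⟨a, fun x hx => mem_plusAt_iff.2 (Or.inl (hsing x hx a ha))⟩
    · push_neg at hsing
      obtain ⟨a, ha, b, hb, hab⟩ := hsing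
      have hpair : ∃ u ∈ P, ∃ v ∈ P, Adj u v := by
        rcases (hconn a ha b hb).cases_head with h1 | ⟨y, ⟨_, hy, hadj⟩, _⟩
        · exact absurd h1 hab
        · exact ⟨a, ha, y, hy, hadj⟩
      obtain ⟨u, hu, v, hv, huv⟩ := hpair
      have hB : ∀ x ∈ P, x ≠ u → x ≠ v → Adj x u ∨ Adj x v := by
        intro x hx hxu hxv
        rcases (hconn x hx u hu).cases_head with h1 | ⟨y, ⟨_, hy, hadj⟩, _⟩
        · exact absurd h1 hxu
        · by_cases hyu : y = u
          · exact Or.inl (hyu ▸ hadj)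
          by_cases hyv : y = v
          · exact Or.inr (hyv ▸ hadj)
          exfalso; apply h
          refine ⟨{x, y}, {u, v}, ⟨x, y, hadj, rfl⟩, ⟨u, v, huv, rfl⟩, ?_, ?_, ?_⟩
          · intro t ht; simp only [Finset.mem_insert, Finset.mem_singleton] at ht
            rcases ht with rfl | rfl <;> assumption
          · intro t ht; simp only [Finset.mem_insert, Finset.mem_singleton] at ht
            rcases ht with rfl | rfl <;> assumption
          · rw [Finset.disjoint_left]
            intro t ht ht'
            simp only [Finset.mem_insert, Finset.mem_singleton] at ht ht'
            rcases ht with rfl | rfl <;> rcases ht' with rfl | rfl <;> simp_all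
      have hD : ∀ x ∈ P, ∀ y ∈ P, Adj x u → x ≠ v → Adj y v → y ≠ u → False := by
        intro x hx y hy hxu hxv hyv hyu
        have hxy : x ≠ y := fun heq => no_common huv hxu (heq ▸ hyv)
        apply h
        refine ⟨{x, u}, {y, v}, ⟨x, u, hxu, rfl⟩, ⟨y, v, hyv, rfl⟩, ?_, ?_, ?_⟩
        · intro t ht; simp only [Finset.mem_insert, Finset.mem_singleton] at ht
          rcases ht with rfl | rfl <;> assumption
        · intro t ht; simp only [Finset.mem_insert, Finset.mem_singleton] at ht
          rcases ht with rfl | rfl <;> assumption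
        · rw [Finset.disjoint_left]
          intro t ht ht'
          simp only [Finset.mem_insert, Finset.mem_singleton] at ht ht'
          have huv' : u ≠ v := huv.ne'
          rcases ht with rfl | rfl <;> rcases ht' with rfl | rfl <;> simp_all
      by_cases hcase : ∀ x ∈ P, x = u ∨ x = v ∨ Adj x u
      · refine ⟨u, fun x hx => ?_⟩
        rcases hcase x hx with rfl | rfl | hadj
        · exact mem_plusAt_iff.2 (Or.inl rfl)
        · exact mem_plusAt_iff.2 (Or.inr huv.symm')
        · exact mem_plusAt_iff.2 (Or.inr hadj)
      · push_neg at hcase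
        obtain ⟨x, hx, hxu, hxv, hnadj⟩ := hcase
        have hxv' : Adj x v := (hB x hx hxu hxv).resolve_left hnadj
        refine ⟨v, fun y hy => ?_⟩
        by_cases hyu : y = u
        · exact mem_plusAt_iff.2 (Or.inr (hyu ▸ huv))
        by_cases hyv : y = v
        · exact mem_plusAt_iff.2 (Or.inl hyv)
        rcases hB y hy hyu hyv with hya | hyb
        · exact absurd (hD y hy x hx hya hyv hxv' hxu) not_false
        · exact mem_plusAt_iff.2 (Or.inr hyb)
  · rintro ⟨c, hsub⟩ ⟨D1, D2, ⟨a1, b1, h1, rfl⟩, ⟨a2, b2, h2, rfl⟩, hs1, hs2, hdisj⟩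
    have key : ∀ a b : ℤ × ℤ, Adj a b → ({a, b} : Finset (ℤ × ℤ)) ⊆ plusAt c →
        c = a ∨ c = b := by
      intro a b hab hsub'
      have ha := mem_plusAt_iff.1 (hsub' (Finset.mem_insert_self a {b}))
      have hb := mem_plusAt_iff.1 (hsub' (Finset.mem_insert_of_mem (Finset.mem_singleton_self b)))
      rcases ha with heq | ha
      · exact Or.inl heq.symm
      rcases hb with heq | hb
      · exact Or.inr heq.symm
      exact absurd (no_common hab ha.symm' hb.symm') not_false
    have hc1 : c ∈ ({a1, b1} : Finset (ℤ × ℤ)) := by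
      rcases key a1 b1 h1 (hs1.trans hsub) with rfl | rfl <;> simp
    have hc2 : c ∈ ({a2, b2} : Finset (ℤ × ℤ)) := by
      rcases key a2 b2 h2 (hs2.trans hsub) with rfl | rfl <;> simp
    exact Finset.disjoint_left.1 hdisj hc1 hc2
end

section
/- Let S be a finite set of polyomino tiles in ℤ^d (closed under rotations if rotations are allowed) with the fountain property: for every tile s ∈ S placed in ℤ^d and every unit cell u edge-adjacent to s with u ∉ s, the region s ∪ {u} is tileable by S. Let b ∈ S. Then every finite connected region R ⊆ ℤ^d that contains a translate (rotation) of b is tileable by S. -/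
variable {d : ℕ}

/-- Edge-adjacency of cells in `ℤ^d`: the cells differ by 1 in exactly one coordinate. -/
def AdjD (a b : Fin d → ℤ) : Prop :=
  ∃ j, (a j - b j).natAbs = 1 ∧ ∀ i, i ≠ j → a i = b i

/-- A finset of cells of `ℤ^d` is connected (via edge-adjacency). -/
def ConnD (R : Finset (Fin d → ℤ)) : Prop :=
  ∀ a ∈ R, ∀ b ∈ R, Relation.ReflTransGen (fun x y => x ∈ R ∧ y ∈ R ∧ AdjD x y) a b

/-- The translate of tile `t` by the vector `v`. -/
def placeD (t : Finset (Fin d → ℤ)) (v : Fin d → ℤ) : Finset (Fin d → ℤ) :=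
  t.image (· + v)

/-- `l` is a tiling of `R` by translates of tiles in `S`. -/
def IsTilingD (S : Set (Finset (Fin d → ℤ))) (R : Finset (Fin d → ℤ))
    (l : List (Finset (Fin d → ℤ))) : Prop :=
  (∀ p ∈ l, ∃ t ∈ S, ∃ v, p = placeD t v) ∧ l.Pairwise Disjoint ∧ l.foldr (· ∪ ·) ∅ = R

/-- `R` is tileable by translates of tiles in `S`. -/
def TileableD (S : Set (Finset (Fin d → ℤ))) (R : Finset (Fin d → ℤ)) : Prop :=
  ∃ l, IsTilingD S R l

section aux
variable {α : Type*} [DecidableEq α]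

lemma mem_foldr_union {l : List (Finset α)} {x : α} :
    x ∈ l.foldr (· ∪ ·) ∅ ↔ ∃ p ∈ l, x ∈ p := by
  induction l with
  | nil => simp
  | cons a t ih => simp [ih]

lemma subset_foldr_union {l : List (Finset α)} {p : Finset α} (hp : p ∈ l) :
    p ⊆ l.foldr (· ∪ ·) ∅ :=
  fun x hx => mem_foldr_union.mpr ⟨p, hp, hx⟩

lemma foldr_union_erase {l : List (Finset α)} {p : Finset α} (hp : p ∈ l) :
    l.foldr (· ∪ ·) ∅ = p ∪ (l.erase p).foldr (· ∪ ·) ∅ := by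
  induction l with
  | nil => cases hp
  | cons a t ih =>
    by_cases h : a = p
    · subst h; simp [List.erase_cons_head]
    · have hpt : p ∈ t := by
        rcases List.mem_cons.mp hp with h' | h'
        · exact absurd h'.symm h
        · exact h'
      rw [List.erase_cons_tail (by simpa using h)]
      simp only [List.foldr_cons]
      rw [ih hpt, Finset.union_left_comm]

lemma disjoint_foldr_union {l : List (Finset α)} {x : Finset α}
    (h : ∀ q ∈ l, Disjoint x q) : Disjoint x (l.foldr (· ∪ ·) ∅) := by
  induction l with
  | nil => simp
  | cons a t ih =>
    simp only [List.foldr_cons]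
    exact Finset.disjoint_union_right.mpr
      ⟨h a List.mem_cons_self, ih fun q hq => h q (List.mem_cons_of_mem _ hq)⟩

lemma foldr_union_append {l m : List (Finset α)} :
    (l ++ m).foldr (· ∪ ·) ∅ = l.foldr (· ∪ ·) ∅ ∪ m.foldr (· ∪ ·) ∅ := by
  induction l with
  | nil => simp
  | cons a t ih => simp [ih, Finset.union_assoc]

end aux

lemma exists_boundary {R A : Finset (Fin d → ℤ)} (hconn : ConnD R)
    (hAR : A ⊆ R) {a : Fin d → ℤ} (ha : a ∈ A) {r} (hr : r ∈ R) (hrA : r ∉ A) :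
    ∃ u, u ∈ R ∧ u ∉ A ∧ ∃ c ∈ A, AdjD u c := by
  have key : ∀ x y : Fin d → ℤ,
      Relation.ReflTransGen (fun x y => x ∈ R ∧ y ∈ R ∧ AdjD x y) x y →
      x ∉ A → y ∈ A → ∃ u, u ∈ R ∧ u ∉ A ∧ ∃ c ∈ A, AdjD u c := by
    intro x y h
    induction h using Relation.ReflTransGen.head_induction_on with
    | refl => intro hx hy; exact absurd hy hx
    | @head x z step rest ih =>
      intro hx _hy
      by_cases hz : z ∈ A
      · exact ⟨x, step.1, hx, z, hz, step.2.2⟩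
      · exact ih hz ‹_›
  exact key r a (hconn r hr a (hAR ha)) hrA ha

lemma tileable_insert (S : Set (Finset (Fin d → ℤ)))
    (hfountain : ∀ s ∈ S, ∀ v : Fin d → ℤ, ∀ u, u ∉ placeD s v →
      (∃ c ∈ placeD s v, AdjD u c) → TileableD S (insert u (placeD s v)))
    {A : Finset (Fin d → ℤ)} (hA : TileableD S A)
    {u c : Fin d → ℤ} (hu : u ∉ A) (hc : c ∈ A) (hadj : AdjD u c) :
    TileableD S (insert u A) := by
  obtain ⟨l, hmem, hpw, hfold⟩ := hA
  obtain ⟨p, hpl, hcp⟩ : ∃ p ∈ l, c ∈ p := mem_foldr_union.mp (hfold ▸ hc)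
  obtain ⟨s, hs, w, rfl⟩ := hmem p hpl
  have hpA : placeD s w ⊆ A := hfold ▸ subset_foldr_union hpl
  have hup : u ∉ placeD s w := fun h => hu (hpA h)
  obtain ⟨m, hmmem, hmpw, hmfold⟩ := hfountain s hs w u hup ⟨c, hcp, hadj⟩
  set p := placeD s w with hp
  have hpw2 : (p :: l.erase p).Pairwise Disjoint :=
    ((List.perm_cons_erase hpl).pairwise_iff (fun h => Disjoint.symm h)).mp hpw
  have hdis : ∀ q ∈ l.erase p, Disjoint p q := (List.pairwise_cons.mp hpw2).1
  have hAp : p ∪ (l.erase p).foldr (· ∪ ·) ∅ = A := by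
    rw [← foldr_union_erase hpl, hfold]
  have hdisj : Disjoint p ((l.erase p).foldr (· ∪ ·) ∅) := disjoint_foldr_union hdis
  have hEq : (l.erase p).foldr (· ∪ ·) ∅ = A \ p := by
    rw [← hAp, Finset.union_sdiff_cancel_left hdisj]
  refine ⟨m ++ l.erase p, ?_, ?_, ?_⟩
  · intro q hq
    rcases List.mem_append.mp hq with h | h
    · exact hmmem q h
    · exact hmem q (List.mem_of_mem_erase h)
  · refine List.pairwise_append.mpr ⟨hmpw, hpw.sublist (List.erase_sublist (a := p) (l := l)), ?_⟩
    intro q hq q' hq'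
    have hq1 : q ⊆ insert u p := hmfold ▸ subset_foldr_union hq
    have hq2 : q' ⊆ A \ p := hEq ▸ subset_foldr_union hq'
    have : Disjoint (insert u p) (A \ p) := by
      rw [Finset.insert_eq]
      refine Finset.disjoint_union_left.mpr ⟨?_, Finset.disjoint_sdiff⟩
      simp only [Finset.disjoint_left, Finset.mem_singleton]
      rintro x rfl hx
      exact hu (Finset.mem_sdiff.mp hx).1
    exact this.mono hq1 hq2
  · rw [foldr_union_append, hmfold, hEq, Finset.insert_union,
      Finset.union_sdiff_of_subset hpA]

/-- If `S` is a finite fountain set of polyomino tiles in `ℤ^d` (already closed under whatever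
rotations are allowed) and `b ∈ S`, then every finite connected region containing a translate
of `b` is tileable by `S`. -/
theorem fountain_tiles_regions_containing_generator (d : ℕ)
    (S : Set (Finset (Fin d → ℤ))) (hfin : S.Finite)
    (htiles : ∀ s ∈ S, s.Nonempty ∧ ConnD s)
    (hfountain : ∀ s ∈ S, ∀ v : Fin d → ℤ, ∀ u, u ∉ placeD s v →
      (∃ c ∈ placeD s v, AdjD u c) → TileableD S (insert u (placeD s v)))
    (b : Finset (Fin d → ℤ)) (hb : b ∈ S)
    (R : Finset (Fin d → ℤ)) (hconn : ConnD R)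
    (hcontains : ∃ v, placeD b v ⊆ R) : TileableD S R := by
  obtain ⟨v, hv⟩ := hcontains
  have hbne : (placeD b v).Nonempty := ((htiles b hb).1).image _
  have hbase : TileableD S (placeD b v) :=
    ⟨[placeD b v], by simpa using ⟨b, hb, v, rfl⟩, by simp, by simp⟩
  have key : ∀ n (A : Finset (Fin d → ℤ)), A ⊆ R → A.Nonempty → TileableD S A →
      (R \ A).card = n → TileableD S R := by
    intro n
    induction n with
    | zero =>
      intro A hAR _hne hT hcard
      have hempty : R \ A = ∅ := Finset.card_eq_zero.mp hcard
      have hAeq : A = R := Finset.Subset.antisymm hAR (fun x hx => by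
        by_contra hxA
        exact absurd (hempty ▸ Finset.mem_sdiff.mpr ⟨hx, hxA⟩) (Finset.notMem_empty x))
      exact hAeq ▸ hT
    | succ n ih =>
      intro A hAR hne hT hcard
      have hpos : (R \ A).Nonempty := Finset.card_pos.mp (by omega)
      obtain ⟨r, hr⟩ := hpos
      have hrR := (Finset.mem_sdiff.mp hr).1
      have hrA := (Finset.mem_sdiff.mp hr).2
      obtain ⟨a, ha⟩ := hne
      obtain ⟨u, huR, huA, c, hcA, hadj⟩ := exists_boundary hconn hAR ha hrR hrA
      have hT' := tileable_insert S hfountain hT huA hcA hadj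
      refine ih (insert u A) (Finset.insert_subset huR hAR)
        ⟨u, Finset.mem_insert_self _ _⟩ hT' ?_
      have heq : R \ insert u A = (R \ A).erase u := by
        ext x
        simp only [Finset.mem_sdiff, Finset.mem_insert, Finset.mem_erase]
        tauto
      rw [heq, Finset.card_erase_of_mem (Finset.mem_sdiff.mpr ⟨huR, huA⟩), hcard]
      omega
  exact key (R \ placeD b v).card (placeD b v) hv hbne hbase rfl
end

section
/- With the fixed-orientation tiles D = {(0,0),(1,0)} (horizontal domino) and L = {(0,0),(1,0),(1,1)} (no rotations), the two configurations of Local Move 1 tile the same region: for any k ≥ 1, the region covered by [an L-tile at position p, k horizontal dominoes in the row above shifted appropriately, and an L-tile at the right end] equals the region covered by [a horizontal domino at p, k−1 dominoes, and a 2×2 block of two stacked horizontal dominoes at the right end]; consequently, if one configuration appears in a tiling of a region R, replacing it by the other yields another valid tiling of R. -/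
attribute [local instance] Classical.propDecidable

/-- The translate of tile `t` by `v` (fixed orientation: no rotations or reflections). -/
def placeT (t : Finset (ℤ × ℤ)) (v : ℤ × ℤ) : Finset (ℤ × ℤ) := t.image (· + v)

/-- `l` is a tiling of `R` by translates of tiles in `S` (no rotations):
the pieces are translates of tiles of `S`, are pairwise disjoint, and their union is `R`. -/
def IsTilingT (S : Set (Finset (ℤ × ℤ))) (R : Finset (ℤ × ℤ))
    (l : List (Finset (ℤ × ℤ))) : Prop :=
  (∀ p ∈ l, ∃ t ∈ S, ∃ v, p = placeT t v) ∧ l.Pairwise Disjoint ∧ l.foldr (· ∪ ·) ∅ = R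

/-- `R` is tileable by translates of tiles in `S`. -/
def TileableT (S : Set (Finset (ℤ × ℤ))) (R : Finset (ℤ × ℤ)) : Prop :=
  ∃ l, IsTilingT S R l

/-- The horizontal domino. -/
def D : Finset (ℤ × ℤ) := {(0, 0), (1, 0)}

/-- The (fixed-orientation) L-tile. -/
def L : Finset (ℤ × ℤ) := {(0, 0), (1, 0), (1, 1)}

/-- First configuration of Local Move 1: an L-tile, `k` dominoes on the row above, and an
L-tile at the right end. -/
def moveA (k : ℕ) : List (Finset (ℤ × ℤ)) :=
  placeT L ((0 : ℤ), (0 : ℤ)) :: placeT L (2 * (k : ℤ) + 1, 0) ::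
    (List.range k).map (fun j => placeT D (2 * (j : ℤ) + 2, 1))

/-- Second configuration of Local Move 1: dominoes only. -/
def moveB (k : ℕ) : List (Finset (ℤ × ℤ)) :=
  placeT D ((0 : ℤ), (0 : ℤ)) :: placeT D (2 * (k : ℤ) + 1, 0) ::
    placeT D (2 * (k : ℤ) + 1, 1) ::
    (List.range k).map (fun j => placeT D (2 * (j : ℤ) + 1, 1))

lemma map_flatMap_pure {α β γ : Type} (g : α → β) (h : β → γ) (l : List α) :
    List.map h (l.flatMap fun a => [g a]) = l.map (fun a => h (g a)) := by
  induction l with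
  | nil => simp
  | cons a l ih => simp [ih]

lemma normA (k : ℕ) : moveA k = placeT L ((0 : ℤ), (0 : ℤ)) :: placeT L (2 * (k : ℤ) + 1, 0) ::
    (List.range k).map (fun j : ℕ => placeT D (2 * (j : ℤ) + 2, 1)) := by
  simp only [moveA, List.pure_def, List.bind_eq_flatMap, map_flatMap_pure]

lemma normB (k : ℕ) : moveB k = placeT D ((0 : ℤ), (0 : ℤ)) :: placeT D (2 * (k : ℤ) + 1, 0) ::
    placeT D (2 * (k : ℤ) + 1, 1) ::
    (List.range k).map (fun j : ℕ => placeT D (2 * (j : ℤ) + 1, 1)) := by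
  simp only [moveB, List.pure_def, List.bind_eq_flatMap, map_flatMap_pure]

lemma mem_placeD (a b : ℤ) (x : ℤ × ℤ) :
    x ∈ placeT D (a, b) ↔ x.2 = b ∧ (x.1 = a ∨ x.1 = a + 1) := by
  simp [placeT, D, Prod.ext_iff]; omega

lemma mem_placeL (a b : ℤ) (x : ℤ × ℤ) :
    x ∈ placeT L (a, b) ↔ (x.2 = b ∧ (x.1 = a ∨ x.1 = a + 1)) ∨ (x.2 = b + 1 ∧ x.1 = a + 1) := by
  simp [placeT, L, Prod.ext_iff]; omega

lemma mem_foldr (l : List (Finset (ℤ × ℤ))) (x : ℤ × ℤ) :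
    x ∈ l.foldr (· ∪ ·) ∅ ↔ ∃ p ∈ l, x ∈ p := by
  induction l with
  | nil => simp
  | cons a l ih => simp [ih]

lemma subset_foldr {l : List (Finset (ℤ × ℤ))} {p : Finset (ℤ × ℤ)} (hp : p ∈ l) :
    p ⊆ l.foldr (· ∪ ·) ∅ := fun x hx => (mem_foldr l x).2 ⟨p, hp, hx⟩

lemma foldr_union_append_s11 (l₁ l₂ : List (Finset (ℤ × ℤ))) :
    (l₁ ++ l₂).foldr (· ∪ ·) ∅ = l₁.foldr (· ∪ ·) ∅ ∪ l₂.foldr (· ∪ ·) ∅ := by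
  induction l₁ with
  | nil => simp
  | cons a l ih => simp [ih, Finset.union_assoc]

lemma mem_foldr_range (f : ℕ → Finset (ℤ × ℤ)) (k : ℕ) (x : ℤ × ℤ) :
    x ∈ ((List.range k).map f).foldr (· ∪ ·) ∅ ↔ ∃ j < k, x ∈ f j := by
  simp [mem_foldr]

/-- Characterization of the region of `moveA`. -/
lemma memA (k : ℕ) (x : ℤ × ℤ) :
    x ∈ (moveA k).foldr (· ∪ ·) ∅ ↔
      (x.2 = 0 ∧ (x.1 = 0 ∨ x.1 = 1 ∨ x.1 = 2 * k + 1 ∨ x.1 = 2 * k + 2)) ∨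
      (x.2 = 1 ∧ 1 ≤ x.1 ∧ x.1 ≤ 2 * k + 2) := by
  rw [normA]
  simp only [List.foldr_cons, Finset.mem_union, mem_foldr_range, mem_placeL, mem_placeD]
  constructor
  · rintro (h | h | ⟨j, hj, h⟩) <;> omega
  · rintro (⟨h2, h1⟩ | ⟨h2, h1, h1'⟩)
    · rcases h1 with h | h | h | h
      · exact Or.inl (by omega)
      · exact Or.inl (by omega)
      · exact Or.inr (Or.inl (by omega))
      · exact Or.inr (Or.inl (by omega))
    · by_cases hx1 : x.1 = 1
      · exact Or.inl (by omega)
      · by_cases hx2 : x.1 = 2 * k + 2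
        · exact Or.inr (Or.inl (by omega))
        · exact Or.inr (Or.inr ⟨((x.1 - 2) / 2).toNat, by omega, by omega⟩)

/-- Characterization of the region of `moveB`. -/
lemma memB (k : ℕ) (x : ℤ × ℤ) :
    x ∈ (moveB k).foldr (· ∪ ·) ∅ ↔
      (x.2 = 0 ∧ (x.1 = 0 ∨ x.1 = 1 ∨ x.1 = 2 * k + 1 ∨ x.1 = 2 * k + 2)) ∨
      (x.2 = 1 ∧ 1 ≤ x.1 ∧ x.1 ≤ 2 * k + 2) := by
  rw [normB]
  simp only [List.foldr_cons, Finset.mem_union, mem_foldr_range, mem_placeD]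
  constructor
  · rintro (h | h | h | ⟨j, hj, h⟩) <;> omega
  · rintro (⟨h2, h1⟩ | ⟨h2, h1, h1'⟩)
    · rcases h1 with h | h | h | h
      · exact Or.inl (by omega)
      · exact Or.inl (by omega)
      · exact Or.inr (Or.inl (by omega))
      · exact Or.inr (Or.inl (by omega))
    · by_cases hx : 2 * (k : ℤ) + 1 ≤ x.1
      · exact Or.inr (Or.inr (Or.inl (by omega)))
      · exact Or.inr (Or.inr (Or.inr ⟨((x.1 - 1) / 2).toNat, by omega, by omega⟩))

lemma regA_eq_regB (k : ℕ) :
    (moveA k).foldr (· ∪ ·) ∅ = (moveB k).foldr (· ∪ ·) ∅ := by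
  ext x; rw [memA, memB]

lemma shapesA (k : ℕ) : ∀ p ∈ moveA k, ∃ t ∈ ({D, L} : Set (Finset (ℤ × ℤ))), ∃ v, p = placeT t v := by
  intro p hp
  rw [normA] at hp
  simp only [List.mem_cons, List.mem_map, List.mem_range] at hp
  rcases hp with rfl | rfl | ⟨j, hj, rfl⟩
  · exact ⟨L, by simp, _, rfl⟩
  · exact ⟨L, by simp, _, rfl⟩
  · exact ⟨D, by simp, _, rfl⟩

lemma shapesB (k : ℕ) : ∀ p ∈ moveB k, ∃ t ∈ ({D, L} : Set (Finset (ℤ × ℤ))), ∃ v, p = placeT t v := by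
  intro p hp
  rw [normB] at hp
  simp only [List.mem_cons, List.mem_map, List.mem_range] at hp
  rcases hp with rfl | rfl | rfl | ⟨j, hj, rfl⟩ <;> exact ⟨D, by simp, _, rfl⟩

lemma pairwiseA (k : ℕ) (hk : 1 ≤ k) : (moveA k).Pairwise Disjoint := by
  rw [normA]
  refine List.Pairwise.cons ?_ (List.Pairwise.cons ?_ ?_)
  · intro q hq
    simp only [List.mem_cons, List.mem_map, List.mem_range] at hq
    rcases hq with rfl | ⟨j, hj, rfl⟩ <;>
      · rw [Finset.disjoint_left]
        intro x hx hx'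
        rw [mem_placeL] at hx
        first
          | rw [mem_placeL] at hx'
          | rw [mem_placeD] at hx'
        omega
  · intro q hq
    simp only [List.mem_map, List.mem_range] at hq
    obtain ⟨j, hj, rfl⟩ := hq
    rw [Finset.disjoint_left]
    intro x hx hx'
    rw [mem_placeL] at hx
    rw [mem_placeD] at hx'
    omega
  · rw [List.pairwise_map]
    refine (List.pairwise_lt_range (n := k)).imp ?_
    intro i j hij
    rw [Finset.disjoint_left]
    intro x hx hx'
    rw [mem_placeD] at hx hx'
    omega

lemma pairwiseB (k : ℕ) (hk : 1 ≤ k) : (moveB k).Pairwise Disjoint := by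
  rw [normB]
  refine List.Pairwise.cons ?_ (List.Pairwise.cons ?_ (List.Pairwise.cons ?_ ?_))
  · intro q hq
    simp only [List.mem_cons, List.mem_map, List.mem_range] at hq
    rcases hq with rfl | rfl | ⟨j, hj, rfl⟩ <;>
      · rw [Finset.disjoint_left]
        intro x hx hx'
        rw [mem_placeD] at hx
        rw [mem_placeD] at hx'
        omega
  · intro q hq
    simp only [List.mem_cons, List.mem_map, List.mem_range] at hq
    rcases hq with rfl | ⟨j, hj, rfl⟩ <;>
      · rw [Finset.disjoint_left]
        intro x hx hx'
        rw [mem_placeD] at hx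
        rw [mem_placeD] at hx'
        omega
  · intro q hq
    simp only [List.mem_map, List.mem_range] at hq
    obtain ⟨j, hj, rfl⟩ := hq
    rw [Finset.disjoint_left]
    intro x hx hx'
    rw [mem_placeD] at hx hx'
    omega
  · rw [List.pairwise_map]
    refine (List.pairwise_lt_range (n := k)).imp ?_
    intro i j hij
    rw [Finset.disjoint_left]
    intro x hx hx'
    rw [mem_placeD] at hx hx'
    omega

/-- Local move 1: the two configurations are both valid tilings of the same region, so in
any tiling of a region `R`, one configuration may be replaced by the other. -/
theorem local_move_one (k : ℕ) (hk : 1 ≤ k) :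
    IsTilingT {D, L} ((moveA k).foldr (· ∪ ·) ∅) (moveA k) ∧
    IsTilingT {D, L} ((moveA k).foldr (· ∪ ·) ∅) (moveB k) ∧
    (∀ (R : Finset (ℤ × ℤ)) (rest : List (Finset (ℤ × ℤ))),
      IsTilingT {D, L} R (moveA k ++ rest) → IsTilingT {D, L} R (moveB k ++ rest)) := by
  refine ⟨⟨shapesA k, pairwiseA k hk, rfl⟩, ⟨shapesB k, pairwiseB k hk, (regA_eq_regB k).symm⟩, ?_⟩
  rintro R rest ⟨hshape, hpair, hunion⟩
  rw [List.pairwise_append] at hpair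
  obtain ⟨hpA, hpR, hcross⟩ := hpair
  have hdisj : ∀ b ∈ rest, Disjoint ((moveA k).foldr (· ∪ ·) ∅) b := by
    intro b hb
    rw [Finset.disjoint_left]
    intro x hx
    obtain ⟨p, hp, hxp⟩ := (mem_foldr _ _).1 hx
    exact Finset.disjoint_left.1 (hcross p hp b hb) hxp
  refine ⟨?_, ?_, ?_⟩
  · intro p hp
    rcases List.mem_append.1 hp with h | h
    · exact shapesB k p h
    · exact hshape p (List.mem_append.2 (Or.inr h))
  · rw [List.pairwise_append]
    refine ⟨pairwiseB k hk, hpR, ?_⟩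
    intro a ha b hb
    refine Finset.disjoint_of_subset_left ?_ (hdisj b hb)
    rw [regA_eq_regB]
    exact subset_foldr ha
  · rw [foldr_union_append_s11, ← regA_eq_regB, ← foldr_union_append_s11, hunion]
end
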